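/- For every m ≥ 0 and z ∈ ℝ, V_m(z) ≥ V_{m+1}(z), i.e., the family of potentials V_m is pointwise non-increasing in m. -/

import Mathlib

open MeasureTheory Real

/-- The potential `V_m(z) = ∫_0^∞ (tᵐ e^{-t}/m!) / √(2t/B + z²) dt`. -/
noncomputable def Vm (B : ℝ) (m : ℕ) (z : ℝ) : ℝ :=
  ∫ t in Set.Ioi (0 : ℝ), (t ^ m * Real.exp (-t) / (Nat.factorial m)) / Real.sqrt (2 * t / B + z ^ 2)

lemma gamma_pow_integrable (n : ℕ) :
    IntegrableOn (fun t : ℝ => t ^ n * Real.exp (-t)) (Set.Ioi 0) := by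
  have h := Real.GammaIntegral_convergent (s := (n + 1 : ℝ)) (by positivity)
  refine h.congr_fun (fun x hx => ?_) measurableSet_Ioi
  beta_reduce
  rw [show ((n : ℝ) + 1 - 1 : ℝ) = (n : ℝ) by ring, Real.rpow_natCast]
  ring

lemma gamma_pow_integral (n : ℕ) :
    ∫ t in Set.Ioi (0 : ℝ), t ^ n * Real.exp (-t) = n.factorial := by
  have h := Real.Gamma_eq_integral (s := (n + 1 : ℝ)) (by positivity)
  rw [Real.Gamma_nat_eq_factorial] at h
  rw [h]
  refine setIntegral_congr_fun measurableSet_Ioi (fun x hx => ?_)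
  rw [show ((n : ℝ) + 1 - 1 : ℝ) = (n : ℝ) by ring, Real.rpow_natCast]
  ring

lemma inv_sqrt_bound (B z : ℝ) (hB : 0 < B) {t : ℝ} (ht : 0 < t) :
    (Real.sqrt (2 * t / B + z ^ 2))⁻¹ ≤ Real.sqrt (B / 2) * t ^ (-(1/2) : ℝ) := by
  have h2t : 0 < 2 * t / B := by positivity
  have h1 : Real.sqrt (2 * t / B) ≤ Real.sqrt (2 * t / B + z ^ 2) :=
    Real.sqrt_le_sqrt (by nlinarith [sq_nonneg z])
  have h2 : 0 < Real.sqrt (2 * t / B) := Real.sqrt_pos.2 h2t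
  have h3 : (Real.sqrt (2 * t / B + z ^ 2))⁻¹ ≤ (Real.sqrt (2 * t / B))⁻¹ :=
    inv_anti₀ h2 h1
  refine h3.trans_eq ?_
  have ht' : t ≠ 0 := ht.ne'
  rw [← Real.sqrt_inv, show (2 * t / B)⁻¹ = (B / 2) * t⁻¹ by field_simp,
    Real.sqrt_mul (by positivity : (0:ℝ) ≤ B / 2), Real.sqrt_inv t,
    show (Real.sqrt t)⁻¹ = t ^ (-(1/2) : ℝ) by
      rw [Real.rpow_neg ht.le, Real.sqrt_eq_rpow]]

lemma integrand_integrable (B : ℝ) (hB : 0 < B) (n : ℕ) (z : ℝ) :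
    IntegrableOn (fun t : ℝ => t ^ n * Real.exp (-t) / (n.factorial : ℝ) /
      Real.sqrt (2 * t / B + z ^ 2)) (Set.Ioi 0) := by
  have hg : IntegrableOn (fun t : ℝ => (Real.sqrt (B / 2) / (n.factorial : ℝ)) *
      (Real.exp (-t) * t ^ (((n : ℝ) + 1/2) - 1))) (Set.Ioi 0) :=
    (Real.GammaIntegral_convergent (s := (n : ℝ) + 1/2) (by positivity)).const_mul _
  have hmeas : AEStronglyMeasurable (fun t : ℝ => t ^ n * Real.exp (-t) / (n.factorial : ℝ) /
      Real.sqrt (2 * t / B + z ^ 2)) (volume.restrict (Set.Ioi 0)) := by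
    have hm : Measurable fun t : ℝ => t ^ n * Real.exp (-t) / (n.factorial : ℝ) /
        Real.sqrt (2 * t / B + z ^ 2) := by
      apply Measurable.div
      · fun_prop
      · exact (Real.continuous_sqrt.measurable).comp (by fun_prop)
    exact hm.aestronglyMeasurable
  refine hg.mono' hmeas ?_
  rw [ae_restrict_iff' measurableSet_Ioi]
  refine Filter.Eventually.of_forall (fun t ht => ?_)
  rw [Set.mem_Ioi] at ht
  have hfac : (0 : ℝ) < n.factorial := by positivity
  have hnn : 0 ≤ t ^ n * Real.exp (-t) / (n.factorial : ℝ) := by positivity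
  rw [Real.norm_eq_abs, abs_of_nonneg (by positivity)]
  have hb := inv_sqrt_bound B z hB ht
  calc t ^ n * Real.exp (-t) / (n.factorial : ℝ) / Real.sqrt (2 * t / B + z ^ 2)
      = (t ^ n * Real.exp (-t) / (n.factorial : ℝ)) * (Real.sqrt (2 * t / B + z ^ 2))⁻¹ := by
        rw [div_eq_mul_inv]
    _ ≤ (t ^ n * Real.exp (-t) / (n.factorial : ℝ)) * (Real.sqrt (B / 2) * t ^ (-(1/2) : ℝ)) :=
        mul_le_mul_of_nonneg_left hb hnn
    _ = (Real.sqrt (B / 2) / (n.factorial : ℝ)) * (Real.exp (-t) * t ^ (((n : ℝ) + 1/2) - 1)) := by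
        rw [show (((n : ℝ) + 1/2) - 1 : ℝ) = (n : ℝ) + (-(1/2)) by ring,
          Real.rpow_add ht, Real.rpow_natCast]
        field_simp

/-- `V_m(z) ≥ V_{m+1}(z)`, i.e. `V_m` is pointwise non-increasing in `m`. -/
theorem Vm_antitone (B : ℝ) (hB : 0 < B) (m : ℕ) (z : ℝ) :
    Vm B (m + 1) z ≤ Vm B m z := by
  set f : ℝ → ℝ := fun t => (Real.sqrt (2 * t / B + z ^ 2))⁻¹ with hfdef
  set p : ℝ → ℝ := fun t => t ^ m * Real.exp (-t) / (m.factorial : ℝ) with hpdef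
  set q : ℝ → ℝ := fun t => t ^ (m + 1) * Real.exp (-t) / ((m + 1).factorial : ℝ) with hqdef
  set c : ℝ := (m : ℝ) + 1 with hcdef
  have hfpos : ∀ t : ℝ, 0 ≤ f t := fun t => by positivity
  have hfanti : ∀ a b : ℝ, 0 < a → a ≤ b → f b ≤ f a := by
    intro a b ha hab
    have h1 : 0 < 2 * a / B + z ^ 2 := by positivity
    exact inv_anti₀ (Real.sqrt_pos.2 h1)
      (Real.sqrt_le_sqrt (by gcongr))
  have hfacp : (0 : ℝ) < m.factorial := by positivity
  have hfacq : ((m + 1).factorial : ℝ) = ((m : ℝ) + 1) * m.factorial := by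
    rw [Nat.factorial_succ]; push_cast; ring
  -- key factorization
  have hkey : ∀ t : ℝ, p t - q t = (t ^ m * Real.exp (-t) / ((m + 1).factorial : ℝ)) * (c - t) := by
    intro t
    simp only [hpdef, hqdef, hcdef, hfacq]
    field_simp
    ring
  -- pointwise inequality
  have hpt : ∀ t ∈ Set.Ioi (0 : ℝ), q t * f t ≤ p t * f t - (p t - q t) * f c := by
    intro t ht
    rw [Set.mem_Ioi] at ht
    have hc : (0 : ℝ) < c := by positivity
    have : 0 ≤ (p t - q t) * (f t - f c) := by
      rcases le_total t c with h | h
      · refine mul_nonneg ?_ (sub_nonneg.2 (hfanti t c ht h))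
        rw [hkey]
        exact mul_nonneg (by positivity) (sub_nonneg.2 h)
      · have h1 : p t - q t ≤ 0 := by
          rw [hkey]
          have hA : (0:ℝ) ≤ t ^ m * Real.exp (-t) / ((m + 1).factorial : ℝ) := by positivity
          nlinarith
        have h2 : f t - f c ≤ 0 := sub_nonpos.2 (hfanti c t hc h)
        nlinarith
    nlinarith
  -- integrabilities
  have hP : IntegrableOn (fun t : ℝ => p t * f t) (Set.Ioi 0) := by
    have := integrand_integrable B hB m z
    refine this.congr_fun (fun t _ => ?_) measurableSet_Ioi
    simp [hpdef, hfdef, div_eq_mul_inv]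
  have hQ : IntegrableOn (fun t : ℝ => q t * f t) (Set.Ioi 0) := by
    have := integrand_integrable B hB (m + 1) z
    refine this.congr_fun (fun t _ => ?_) measurableSet_Ioi
    simp [hqdef, hfdef, div_eq_mul_inv]
  have hpInt : IntegrableOn p (Set.Ioi 0) := (gamma_pow_integrable m).div_const _
  have hqInt : IntegrableOn q (Set.Ioi 0) := (gamma_pow_integrable (m + 1)).div_const _
  have hpqInt : IntegrableOn (fun t : ℝ => (p t - q t) * f c) (Set.Ioi 0) :=
    (hpInt.sub hqInt).mul_const _
  -- integral values
  have hip : ∫ t in Set.Ioi (0 : ℝ), p t = 1 := by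
    simp only [hpdef, div_eq_mul_inv]
    rw [integral_mul_const, gamma_pow_integral]
    field_simp
  have hiq : ∫ t in Set.Ioi (0 : ℝ), q t = 1 := by
    simp only [hqdef, div_eq_mul_inv]
    rw [integral_mul_const, gamma_pow_integral]
    field_simp
  have hVq : Vm B (m + 1) z = ∫ t in Set.Ioi (0 : ℝ), q t * f t := by
    unfold Vm
    refine setIntegral_congr_fun measurableSet_Ioi (fun t _ => ?_)
    simp [hqdef, hfdef, div_eq_mul_inv]
  have hVp : Vm B m z = ∫ t in Set.Ioi (0 : ℝ), p t * f t := by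
    unfold Vm
    refine setIntegral_congr_fun measurableSet_Ioi (fun t _ => ?_)
    simp [hpdef, hfdef, div_eq_mul_inv]
  rw [hVq, hVp]
  calc ∫ t in Set.Ioi (0 : ℝ), q t * f t
      ≤ ∫ t in Set.Ioi (0 : ℝ), (p t * f t - (p t - q t) * f c) :=
        setIntegral_mono_on hQ (hP.sub hpqInt) measurableSet_Ioi hpt
    _ = (∫ t in Set.Ioi (0 : ℝ), p t * f t) - (∫ t in Set.Ioi (0 : ℝ), (p t - q t)) * f c := by
        rw [integral_sub hP hpqInt, integral_mul_const]
    _ = ∫ t in Set.Ioi (0 : ℝ), p t * f t := by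
        rw [integral_sub hpInt hqInt, hip, hiq]
        ring
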